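/- Let α > 0, a > 0, b > 0, β > 0 and let f be the OGE-LFR probability density function. For every x > 0, the derivative f'(x) vanishes if and only if 1 + b (a + b x)^{-2} - α exp(a x + (b/2) x²) · (1 - (β - 1) / (exp(α(exp(a x + (b/2) x²) - 1)) - 1)) = 0. -/

import Mathlib

/-- The OGE-LFR probability density function. -/
noncomputable def ogeLfrPdf (α a b β x : ℝ) : ℝ :=
  α * β * (a + b * x) * Real.exp (a * x + b / 2 * x ^ 2) *
    Real.exp (-α * (Real.exp (a * x + b / 2 * x ^ 2) - 1)) *
    (1 - Real.exp (-α * (Real.exp (a * x + b / 2 * x ^ 2) - 1))) ^ (β - 1)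

/-- For x > 0 the derivative of the OGE-LFR pdf vanishes iff
`1 + b(a+bx)^{-2} - α e^{ax+(b/2)x²}(1 - (β-1)/(e^{α(e^{ax+(b/2)x²}-1)} - 1)) = 0`. -/
theorem ogeLfr_mode_equation (α a b β : ℝ) (hα : 0 < α) (ha : 0 < a) (hb : 0 < b)
    (hβ : 0 < β) (x : ℝ) (hx : 0 < x) :
    deriv (ogeLfrPdf α a b β) x = 0 ↔
      1 + b * ((a + b * x) ^ 2)⁻¹ -
        α * Real.exp (a * x + b / 2 * x ^ 2) *
          (1 - (β - 1) /
            (Real.exp (α * (Real.exp (a * x + b / 2 * x ^ 2) - 1)) - 1)) = 0 := by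
  have hd : (0:ℝ) < a + b * x := by positivity
  have hgpos : 0 < a * x + b / 2 * x ^ 2 := by positivity
  have hE1lt : 1 < Real.exp (a * x + b / 2 * x ^ 2) := by
    rw [show (1:ℝ) = Real.exp 0 by simp]
    exact Real.exp_lt_exp.mpr hgpos
  have hEpos : 0 < Real.exp (a * x + b / 2 * x ^ 2) := Real.exp_pos _
  have hE1pos : 0 < Real.exp (-α * (Real.exp (a * x + b / 2 * x ^ 2) - 1)) := Real.exp_pos _
  have hE1lt1 : Real.exp (-α * (Real.exp (a * x + b / 2 * x ^ 2) - 1)) < 1 := by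
    apply Real.exp_lt_one_iff.mpr
    nlinarith
  have hTpos : 0 < 1 - Real.exp (-α * (Real.exp (a * x + b / 2 * x ^ 2) - 1)) := by linarith
  -- derivative computation
  have hg' : HasDerivAt (fun y => a * y + b / 2 * y ^ 2) (a + b * x) x := by
    have h1 : HasDerivAt (fun y : ℝ => a * y) (a * 1) x := (hasDerivAt_id x).const_mul a
    have h2 : HasDerivAt (fun y : ℝ => b / 2 * y ^ 2) (b / 2 * (2 * x ^ 1)) x :=
      (hasDerivAt_pow 2 x).const_mul (b / 2)
    have := h1.add h2
    exact this.congr_deriv (by ring)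
  have hEd : HasDerivAt (fun y => Real.exp (a * y + b / 2 * y ^ 2))
      (Real.exp (a * x + b / 2 * x ^ 2) * (a + b * x)) x := hg'.exp
  have hud : HasDerivAt (fun y => -α * (Real.exp (a * y + b / 2 * y ^ 2) - 1))
      (-α * (Real.exp (a * x + b / 2 * x ^ 2) * (a + b * x))) x :=
    (hEd.sub_const 1).const_mul (-α)
  have hE1d : HasDerivAt (fun y => Real.exp (-α * (Real.exp (a * y + b / 2 * y ^ 2) - 1)))
      (Real.exp (-α * (Real.exp (a * x + b / 2 * x ^ 2) - 1)) *
        (-α * (Real.exp (a * x + b / 2 * x ^ 2) * (a + b * x)))) x := hud.exp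
  have hTd : HasDerivAt (fun y => 1 - Real.exp (-α * (Real.exp (a * y + b / 2 * y ^ 2) - 1)))
      (-(Real.exp (-α * (Real.exp (a * x + b / 2 * x ^ 2) - 1)) *
        (-α * (Real.exp (a * x + b / 2 * x ^ 2) * (a + b * x))))) x := hE1d.const_sub 1
  have hTpd : HasDerivAt
      (fun y => (1 - Real.exp (-α * (Real.exp (a * y + b / 2 * y ^ 2) - 1))) ^ (β - 1))
      ((-(Real.exp (-α * (Real.exp (a * x + b / 2 * x ^ 2) - 1)) *
          (-α * (Real.exp (a * x + b / 2 * x ^ 2) * (a + b * x))))) * (β - 1) *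
        (1 - Real.exp (-α * (Real.exp (a * x + b / 2 * x ^ 2) - 1))) ^ (β - 1 - 1)) x :=
    hTd.rpow_const (Or.inl (ne_of_gt hTpos))
  have hc : HasDerivAt (fun y => α * β * (a + b * y)) (α * β * (b * 1)) x :=
    (((hasDerivAt_id x).const_mul b).const_add a).const_mul (α * β)
  have hf := ((hc.mul hEd).mul hE1d).mul hTpd
  simp only [Pi.mul_def] at hf
  rw [show ogeLfrPdf α a b β = (fun y => α * β * (a + b * y) * Real.exp (a * y + b / 2 * y ^ 2) *
      Real.exp (-α * (Real.exp (a * y + b / 2 * y ^ 2) - 1)) *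
      (1 - Real.exp (-α * (Real.exp (a * y + b / 2 * y ^ 2) - 1))) ^ (β - 1)) from rfl, hf.deriv]
  -- abbreviations
  set E := Real.exp (a * x + b / 2 * x ^ 2) with hE
  set E1 := Real.exp (-α * (E - 1)) with hE1
  set T := 1 - E1 with hT
  set t := T ^ (β - 1 - 1) with ht
  set d := a + b * x with hdd
  have htpos : 0 < t := Real.rpow_pos_of_pos hTpos _
  have hT1 : T ^ (β - 1) = t * T := by
    conv_lhs => rw [show β - 1 = (β - 1 - 1) + 1 by ring]
    rw [Real.rpow_add hTpos, Real.rpow_one, ht]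
  have hexp : Real.exp (α * (E - 1)) = E1⁻¹ := by
    rw [hE1, ← Real.exp_neg]
    ring_nf
  rw [hT1, hexp]
  have hden : E1⁻¹ - 1 = T / E1 := by
    rw [hT]; field_simp
  rw [hden, div_div_eq_mul_div]
  set P := α * β * d ^ 2 * E * E1 * t * T with hP
  have hPpos : 0 < P := by positivity
  have key : ((α * β * (b * 1) * E + α * β * d * (E * d)) * E1 +
          α * β * d * E * (E1 * (-α * (E * d)))) * (t * T) +
        α * β * d * E * E1 * (-(E1 * (-α * (E * d))) * (β - 1) * t)
      = P * (1 + b * (d ^ 2)⁻¹ - α * E * (1 - (β - 1) * E1 / T)) := by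
    rw [hP]
    field_simp
    ring
  rw [key, mul_eq_zero]
  simp [ne_of_gt hPpos]
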